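/- Let N ≥ 8 be an integer divisible by 4 and let b_1 be a nonzero real number. Define b ∈ ℝ^{N/2} by b_r = b_1 sin²(π/N)/sin²(rπ/N) for 1 ≤ r ≤ N/2 − 1 and b_{N/2} = (b_1/2) sin²(π/N). Then ψ^{(i,j,k,l)}(b) = 0 for all (i,j,k,l) ∈ S_1 ∪ S_2; moreover, any b' ∈ ℝ^{N/2} whose first component equals b_1 and which satisfies ψ^{(i,j,k,l)}(b') = 0 for all (i,j,k,l) ∈ S_1 ∪ S_2 must equal b. -/

import Mathlib

/-- `c_α = cos(απ/N)` -/
noncomputable def cc (N : ℕ) (a : ℤ) : ℝ := Real.cos (a * Real.pi / N)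

/-- `s_α = sin(απ/N)` -/
noncomputable def ss (N : ℕ) (a : ℤ) : ℝ := Real.sin (a * Real.pi / N)

/-- `f_q^{(i,j,k,l)}` -/
noncomputable def ff (N : ℕ) (i j k l : ℤ) (q : ℕ) : ℝ :=
  if Odd q then cc N (i * q) * cc N (j * q) * cc N (k * q) * cc N (l * q)
  else ss N (i * q) * ss N (j * q) * ss N (k * q) * ss N (l * q)

/-- `ψ^{(i,j,k,l)}(b)` -/
noncomputable def psi (N : ℕ) (b : Fin (N / 2) → ℝ) (i j k l : ℤ) : ℝ :=
  -∑ q : Fin (N / 2), (-1 : ℝ) ^ ((q : ℕ) + 1) * b q * ff N i j k l ((q : ℕ) + 1)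

/-- `S₁ = {(0, n+1, N/2−n, N/2−1) : 1 ≤ n ≤ N/4−1}` -/
def S1set (N : ℕ) : Set (ℤ × ℤ × ℤ × ℤ) :=
  {x | ∃ n : ℤ, 1 ≤ n ∧ n ≤ (N : ℤ) / 4 - 1 ∧
    x = (0, n + 1, (N : ℤ) / 2 - n, (N : ℤ) / 2 - 1)}

/-- `S₂ = {(2−m, m, N/2−1, N/2−1) : m = 1 or 3 ≤ m ≤ N/4+1}` -/
def S2set (N : ℕ) : Set (ℤ × ℤ × ℤ × ℤ) :=
  {x | ∃ m : ℤ, (m = 1 ∨ (3 ≤ m ∧ m ≤ (N : ℤ) / 4 + 1)) ∧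
    x = (2 - m, m, (N : ℤ) / 2 - 1, (N : ℤ) / 2 - 1)}

/-- The explicit solution: `b_r = b₁ sin²(π/N)/sin²(rπ/N)` for `1 ≤ r ≤ N/2 − 1`
and `b_{N/2} = (b₁/2) sin²(π/N)`; the vector is 0-indexed (`b ⟨0,_⟩` is `b_1`). -/
noncomputable def bsol (N : ℕ) (b1 : ℝ) : Fin (N / 2) → ℝ := fun r =>
  if (r : ℕ) + 1 = N / 2 then b1 / 2 * Real.sin (Real.pi / N) ^ 2
  else b1 * Real.sin (Real.pi / N) ^ 2 / Real.sin (((r : ℕ) + 1) * Real.pi / N) ^ 2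

open Real Finset

namespace PsiAux
lemma cos_shift_geom_sum (M : ℕ) (hM : 0 < M) (b : ℤ) (hb : ¬ ((M:ℤ) ∣ b)) (x : ℝ) :
    ∑ t ∈ range M, Real.cos (x + 2*π*b*t/M) = 0 := by
  have hMne : (M:ℂ) ≠ 0 := by exact_mod_cast Nat.cast_ne_zero.mpr hM.ne'
  have hζ : (Complex.exp (2*π*b*Complex.I/M)) ≠ 1 := by
    intro h
    rw [Complex.exp_eq_one_iff] at h
    obtain ⟨n, hn⟩ := h
    apply hb
    have h1 : (2*(π:ℂ)*Complex.I) * b = (2*(π:ℂ)*Complex.I) * (n*M) := by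
      have := hn
      field_simp at this
      linear_combination (2*(π:ℂ)*Complex.I) * this
    have hne : (2*(π:ℂ)*Complex.I) ≠ 0 := by
      simp [Complex.I_ne_zero, Complex.ofReal_ne_zero, Real.pi_ne_zero]
    have h2 : (b:ℂ) = n*M := mul_left_cancel₀ hne h1
    have h2' : b = n*M := by exact_mod_cast h2
    exact ⟨n, by rw [h2']; ring⟩
  have hgeom : ∑ t ∈ range M, (Complex.exp (2*π*b*Complex.I/M))^t = 0 := by
    rw [geom_sum_eq hζ]
    have hpow : (Complex.exp (2*π*b*Complex.I/M))^M = 1 := by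
      rw [← Complex.exp_nat_mul]
      have : (M:ℂ) * (2*π*b*Complex.I/M) = b * (2*π*Complex.I) := by field_simp
      rw [this]
      exact Complex.exp_int_mul_two_pi_mul_I b
    rw [hpow]; simp
  have key : ∀ t:ℕ, Real.cos (x + 2*π*b*t/M)
      = (Complex.exp (x*Complex.I) * (Complex.exp (2*π*b*Complex.I/M))^t).re := by
    intro t
    rw [← Complex.exp_nat_mul, ← Complex.exp_add]
    have : ((x:ℂ)*Complex.I + t * (2*π*b*Complex.I/M)) = ((x + 2*π*b*t/M : ℝ) : ℂ) * Complex.I := by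
      push_cast; field_simp
    rw [this, Complex.exp_ofReal_mul_I_re]
  calc ∑ t ∈ range M, Real.cos (x + 2*π*b*t/M)
      = ∑ t ∈ range M, (Complex.exp (x*Complex.I) * (Complex.exp (2*π*b*Complex.I/M))^t).re :=
        Finset.sum_congr rfl (fun t _ => key t)
    _ = (Complex.exp (x*Complex.I) * ∑ t ∈ range M, (Complex.exp (2*π*b*Complex.I/M))^t).re := by
        rw [Finset.mul_sum, Complex.re_sum]
    _ = 0 := by rw [hgeom]; simp

lemma cos_int_mul_pi_even (b : ℤ) : Real.cos (2*b*π) = 1 := by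
  have := Real.cos_int_mul_two_pi b
  convert this using 2; ring

lemma cos_int_mul_pi_odd (a : ℤ) (ha : Odd a) : Real.cos (a*π) = -1 := by
  obtain ⟨b, rfl⟩ := ha
  have : ((2*b+1 : ℤ):ℝ) * π = 2*b*π + π := by push_cast; ring
  rw [this, Real.cos_add_pi, cos_int_mul_pi_even]

lemma sin_int_pi (a : ℤ) : Real.sin (a*π) = 0 := Real.sin_int_mul_pi a

/-- `∑_{p<M} cos(paπ/M)`: M if 2M∣a, 1 if a odd, 0 otherwise. -/
lemma cos_sum_int (M : ℕ) (hM : 0 < M) (a : ℤ) :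
    ∑ p ∈ range M, Real.cos (p*a*π/M) =
      if (2*(M:ℤ)) ∣ a then (M:ℝ) else if Odd a then 1 else 0 := by
  have hMne : (M:ℝ) ≠ 0 := by positivity
  by_cases hdvd : (2*(M:ℤ)) ∣ a
  · rw [if_pos hdvd]
    obtain ⟨c, rfl⟩ := hdvd
    have : ∀ p ∈ range M, Real.cos (p*((2*(M:ℤ)*c : ℤ):ℝ)*π/M) = 1 := by
      intro p _
      have : (p:ℝ)*((2*(M:ℤ)*c : ℤ):ℝ)*π/M = 2*((p*c : ℤ):ℝ)*π := by push_cast; field_simp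
      rw [this, cos_int_mul_pi_even]
    rw [Finset.sum_congr rfl this]; simp
  · rw [if_neg hdvd]
    rcases Int.even_or_odd a with he | ho
    · obtain ⟨b, rfl⟩ := he
      have hb : ¬ ((M:ℤ) ∣ b) := by
        intro ⟨c, hc⟩; exact hdvd ⟨c, by rw [hc]; ring⟩
      rw [if_neg (Int.not_odd_iff_even.mpr ⟨b, rfl⟩)]
      have h0 := cos_shift_geom_sum M hM b hb 0
      rw [← h0]
      apply Finset.sum_congr rfl
      intro p _
      congr 1
      push_cast
      field_simp; ring
    · rw [if_pos ho]
      obtain ⟨M', rfl⟩ : ∃ M', M = M' + 1 := ⟨M-1, by omega⟩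
      rw [Finset.sum_range_succ']
      have hrefl := Finset.sum_range_reflect (fun p => Real.cos (((p:ℝ)+1)*a*π/((M':ℝ)+1))) M'
      have hneg : ∀ p ∈ range M', Real.cos ((((M'-1-p : ℕ):ℝ)+1)*a*π/((M':ℝ)+1))
          = - Real.cos (((p:ℝ)+1)*a*π/((M':ℝ)+1)) := by
        intro p hp
        simp only [Finset.mem_range] at hp
        have hc2 : (((M'-1-p : ℕ):ℝ)+1) = ((M':ℝ)+1) - ((p:ℝ)+1) := by
          have h3 : (M'-1-p : ℕ) = M' - 1 - p := rfl
          have h4 : ((M'-1-p : ℕ):ℝ) = (M':ℝ) - 1 - p := by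
            have : M' - 1 - p + (1 + p) = M' := by omega
            have := congrArg (fun n : ℕ => (n:ℝ)) this
            push_cast at this
            linarith
          rw [h4]; ring
        rw [hc2]
        have harg : (((M':ℝ)+1) - ((p:ℝ)+1))*a*π/((M':ℝ)+1)
            = a*π - ((p:ℝ)+1)*a*π/((M':ℝ)+1) := by
          field_simp
        rw [harg, Real.cos_sub, sin_int_pi, cos_int_mul_pi_odd a ho]
        ring
      have hsum := Finset.sum_congr rfl hneg
      rw [hrefl] at hsum
      have hz : ∑ p ∈ range M', Real.cos (((p:ℝ)+1)*a*π/((M':ℝ)+1)) = 0 := by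
        have := hsum
        rw [Finset.sum_neg_distrib] at this
        linarith [this]
      push_cast
      simp only [zero_mul, zero_div, Real.cos_zero]
      rw [hz]
      norm_num

lemma not_dvd_of_bounds (m d : ℤ) (h0 : d ≠ 0) (h : |d| < m) : ¬ m ∣ d := by
  intro hd
  have h1 : m ∣ |d| := (dvd_abs m d).mpr hd
  have h2 : m ≤ |d| := Int.le_of_dvd (abs_pos.mpr h0) h1
  omega

lemma not_two_mul_dvd_odd (K : ℕ) (a : ℤ) (ha : Odd a) : ¬ (2*(K:ℤ)) ∣ a := by
  intro hd
  have : (2:ℤ) ∣ a := dvd_trans ⟨K, rfl⟩ hd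
  rw [Int.odd_iff] at ha
  omega

lemma cos_sum_odd_val (M : ℕ) (hM : 0 < M) (a : ℤ) (ha : Odd a) :
    ∑ p ∈ range M, Real.cos (p*a*π/M) = 1 := by
  rw [cos_sum_int M hM a, if_neg (not_two_mul_dvd_odd M a ha), if_pos ha]

lemma cos_sum_zero_val (M : ℕ) (hM : 0 < M) :
    ∑ p ∈ range M, Real.cos (p*(0:ℤ)*π/M) = (M:ℝ) := by
  rw [cos_sum_int M hM 0, if_pos ⟨0, by ring⟩]

lemma cos_sum_even_val (M : ℕ) (hM : 0 < M) (a : ℤ) (ha : Even a) (hnd : ¬ (2*(M:ℤ)) ∣ a) :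
    ∑ p ∈ range M, Real.cos (p*a*π/M) = 0 := by
  rw [cos_sum_int M hM a, if_neg hnd, if_neg (Int.not_odd_iff_even.mpr ha)]

/-- Splitting a sum over `range (2K)` by parity. -/
lemma sum_range_double (K : ℕ) (f : ℕ → ℝ) :
    ∑ q ∈ range (2*K), f q = ∑ t ∈ range K, (f (2*t) + f (2*t+1)) := by
  induction K with
  | zero => simp
  | succ K ih =>
      have h2 : 2*(K+1) = (2*K+1)+1 := by ring
      rw [h2, Finset.sum_range_succ, Finset.sum_range_succ, Finset.sum_range_succ, ← ih]
      ring_nf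

/-- weighted cosine sum (DCT-I row sums) -/
lemma wt_cos_sum (K : ℕ) (hK : 0 < K) (a : ℤ) :
    ∑ p ∈ range (K+1), (if p = 0 ∨ p = K then (1/2:ℝ) else 1) * Real.cos (p*a*π/K)
      = if (2*(K:ℤ)) ∣ a then (K:ℝ) else 0 := by
  obtain ⟨K', rfl⟩ : ∃ K', K = K' + 1 := ⟨K-1, by omega⟩
  rw [Finset.sum_range_succ, Finset.sum_range_succ']
  have hlast : (if K'+1 = 0 ∨ K'+1 = K'+1 then (1/2:ℝ) else 1) = 1/2 := by simp
  have h0 : (if 0 = 0 ∨ 0 = K'+1 then (1/2:ℝ) else 1) = 1/2 := by simp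
  rw [hlast, h0]
  have hmid : ∀ p ∈ range K', (if p+1 = 0 ∨ p+1 = K'+1 then (1/2:ℝ) else 1) *
      Real.cos ((p+1:ℕ)*a*π/(K'+1:ℕ)) = Real.cos ((p+1:ℕ)*a*π/(K'+1:ℕ)) := by
    intro p hp
    simp only [Finset.mem_range] at hp
    have : ¬(p+1 = 0 ∨ p+1 = K'+1) := by omega
    rw [if_neg this, one_mul]
  rw [Finset.sum_congr rfl hmid]
  have hcs := cos_sum_int (K'+1) hK a
  rw [Finset.sum_range_succ'] at hcs
  have hz : Real.cos ((0:ℕ)*a*π/((K'+1:ℕ):ℝ)) = 1 := by norm_num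
  rw [hz] at hcs
  have hKne : ((K'+1:ℕ):ℝ) ≠ 0 := by positivity
  have hKarg : ((K'+1:ℕ):ℝ)*a*π/((K'+1:ℕ):ℝ) = a*π := by
    field_simp
  rw [hKarg]
  by_cases hdvd : (2*((K'+1:ℕ):ℤ)) ∣ a
  · rw [if_pos hdvd] at hcs ⊢
    obtain ⟨c, hc⟩ := hdvd
    have hc1 : ((a:ℤ):ℝ)*π = 2*((((K'+1:ℕ):ℤ)*c : ℤ):ℝ)*π := by
      rw [hc]; push_cast; ring
    rw [hc1, cos_int_mul_pi_even]
    linarith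
  · rw [if_neg hdvd] at hcs ⊢
    rcases Int.even_or_odd a with he | ho
    · rw [if_neg (Int.not_odd_iff_even.mpr he)] at hcs
      obtain ⟨b, hb⟩ := he
      have hc1 : ((a:ℤ):ℝ)*π = 2*(b:ℝ)*π := by rw [hb]; push_cast; ring
      rw [hc1, cos_int_mul_pi_even]
      linarith
    · rw [if_pos ho] at hcs
      rw [cos_int_mul_pi_odd a ho]
      linarith

/-- odd-node cosine sum vanishes for 1 ≤ j ≤ 2K−1 -/
lemma cos_sum_odd_nodes (K : ℕ) (hK : 0 < K) (j : ℕ) (h1 : 1 ≤ j) (h2 : j ≤ 2*K-1) :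
    ∑ t ∈ range K, Real.cos (j*(2*t+1)*π/(2*K)) = 0 := by
  have hKne : (K:ℝ) ≠ 0 := by positivity
  rcases Nat.even_or_odd j with he | ho
  · obtain ⟨b, rfl⟩ := he
    have hb : ¬ ((K:ℤ) ∣ (b:ℤ)) := by
      apply not_dvd_of_bounds
      · have : 1 ≤ b := by omega
        simp only [ne_eq, Nat.cast_eq_zero]
        omega
      · have : b < K := by omega
        rw [abs_of_nonneg (by positivity)]
        exact_mod_cast this
    have h0 := cos_shift_geom_sum K hK b hb ((b:ℝ)*π/K)
    rw [← h0]
    apply Finset.sum_congr rfl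
    intro t _
    congr 1
    push_cast
    field_simp; ring
  · have hrefl := Finset.sum_range_reflect (fun t => Real.cos ((j:ℝ)*(2*(t:ℝ)+1)*π/(2*(K:ℝ)))) K
    have hneg : ∀ t ∈ range K, Real.cos ((j:ℝ)*(2*((K-1-t : ℕ):ℝ)+1)*π/(2*(K:ℝ)))
        = - Real.cos ((j:ℝ)*(2*(t:ℝ)+1)*π/(2*(K:ℝ))) := by
      intro t ht
      simp only [Finset.mem_range] at ht
      have hc : ((K-1-t : ℕ):ℝ) = (K:ℝ) - 1 - t := by
        have h5 : K - 1 - t + (1 + t) = K := by omega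
        have h6 := congrArg (fun n : ℕ => (n:ℝ)) h5
        push_cast at h6; linarith
      rw [hc]
      have harg : (j:ℝ)*(2*((K:ℝ)-1-t)+1)*π/(2*(K:ℝ)) = (j:ℝ)*π - (j:ℝ)*(2*(t:ℝ)+1)*π/(2*(K:ℝ)) := by
        field_simp; ring
      rw [harg, Real.cos_sub]
      have hjo : Odd (j:ℤ) := by exact_mod_cast ho
      have hs1 : Real.sin ((j:ℝ)*π) = 0 := by exact_mod_cast sin_int_pi (j:ℤ)
      have hs2 : Real.cos ((j:ℝ)*π) = -1 := by exact_mod_cast cos_int_mul_pi_odd (j:ℤ) hjo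
      rw [hs1, hs2]; ring
    have hsum := Finset.sum_congr rfl hneg
    rw [Finset.sum_neg_distrib] at hsum
    have e1 : ∑ t ∈ range K, Real.cos ((j:ℝ)*(2*((K-1-t : ℕ):ℝ)+1)*π/(2*(K:ℝ)))
        = ∑ t ∈ range K, Real.cos ((j:ℝ)*(2*(t:ℝ)+1)*π/(2*(K:ℝ))) := hrefl
    rw [hsum] at e1
    linarith

lemma cos_mul_cos (x y : ℝ) : Real.cos x * Real.cos y = (Real.cos (x+y) + Real.cos (x-y))/2 := by
  rw [Real.cos_add, Real.cos_sub]; ring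

/-- DCT-III orthogonality -/
lemma Hlem (K : ℕ) (hK : 0 < K) (t t' : ℕ) (ht : t < K) (ht' : t' < K) :
    ∑ j ∈ range K, Real.cos (j*(2*t+1)*π/(2*K)) * Real.cos (j*(2*t'+1)*π/(2*K))
      = 1/2 + (if t = t' then (K:ℝ)/2 else 0) := by
  have hKne : (K:ℝ) ≠ 0 := by positivity
  set a1 : ℤ := ((t:ℤ)+t'+1) with ha1
  set a2 : ℤ := ((t:ℤ)-t') with ha2
  have hterm : ∀ j ∈ range K, Real.cos ((j:ℝ)*(2*(t:ℝ)+1)*π/(2*(K:ℝ))) * Real.cos ((j:ℝ)*(2*(t':ℝ)+1)*π/(2*(K:ℝ)))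
      = (Real.cos ((j:ℝ)*(a1:ℝ)*π/(K:ℝ)) + Real.cos ((j:ℝ)*(a2:ℝ)*π/(K:ℝ)))/2 := by
    intro j _
    rw [cos_mul_cos]
    have e1 : (j:ℝ)*(2*(t:ℝ)+1)*π/(2*(K:ℝ)) + (j:ℝ)*(2*(t':ℝ)+1)*π/(2*(K:ℝ))
        = (j:ℝ)*(a1:ℝ)*π/(K:ℝ) := by
      rw [ha1]; push_cast; field_simp; ring
    have e2 : (j:ℝ)*(2*(t:ℝ)+1)*π/(2*(K:ℝ)) - (j:ℝ)*(2*(t':ℝ)+1)*π/(2*(K:ℝ))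
        = (j:ℝ)*(a2:ℝ)*π/(K:ℝ) := by
      rw [ha2]; push_cast; field_simp; ring
    rw [e1, e2]
  rw [Finset.sum_congr rfl hterm]
  have hsplit : ∑ j ∈ range K, (Real.cos ((j:ℝ)*(a1:ℝ)*π/(K:ℝ)) + Real.cos ((j:ℝ)*(a2:ℝ)*π/(K:ℝ)))/2
      = ((∑ j ∈ range K, Real.cos ((j:ℝ)*(a1:ℝ)*π/(K:ℝ))) + ∑ j ∈ range K, Real.cos ((j:ℝ)*(a2:ℝ)*π/(K:ℝ)))/2 := by
    rw [← Finset.sum_add_distrib, ← Finset.sum_div]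
  rw [hsplit]
  by_cases htt : t = t'
  · subst htt
    rw [if_pos rfl]
    have hv1 : ∑ j ∈ range K, Real.cos ((j:ℝ)*(a1:ℝ)*π/(K:ℝ)) = 1 := by
      apply cos_sum_odd_val K hK a1 ⟨(t:ℤ), by rw [ha1]; ring⟩
    have hv2 : ∑ j ∈ range K, Real.cos ((j:ℝ)*(a2:ℝ)*π/(K:ℝ)) = (K:ℝ) := by
      have : a2 = 0 := by rw [ha2]; ring
      rw [this]
      exact cos_sum_zero_val K hK
    rw [hv1, hv2]; ring
  · rw [if_neg htt]
    have hbound1 : ¬ (2*(K:ℤ)) ∣ a1 ∨ True := Or.inr trivial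
    rcases Nat.even_or_odd (t + t') with hpar | hpar
    · -- t+t' even : a1 odd gives 1, a2 even nonzero gives 0
      have hv1 : ∑ j ∈ range K, Real.cos ((j:ℝ)*(a1:ℝ)*π/(K:ℝ)) = 1 := by
        apply cos_sum_odd_val K hK a1
        obtain ⟨c, hcc⟩ := hpar
        exact ⟨(c:ℤ), by rw [ha1]; push_cast; omega⟩
      have hv2 : ∑ j ∈ range K, Real.cos ((j:ℝ)*(a2:ℝ)*π/(K:ℝ)) = 0 := by
        apply cos_sum_even_val K hK a2
        · obtain ⟨c, hcc⟩ := hpar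
          rcases Nat.even_or_odd t with hte | hto
          · obtain ⟨u, hu⟩ := hte
            refine ⟨(u:ℤ) - ((c:ℤ) - u), by rw [ha2]; push_cast; omega⟩
          · obtain ⟨u, hu⟩ := hto
            refine ⟨((u:ℤ)+1) - ((c:ℤ) - u), by rw [ha2]; push_cast; omega⟩
        · apply not_dvd_of_bounds
          · rw [ha2]
            intro hcon
            apply htt
            omega
          · rw [ha2, abs_sub_lt_iff]
            constructor <;> [skip; skip] <;> push_cast <;> omega
      rw [hv1, hv2]; ring
    · -- t+t' odd : a1 even in (0,2K) gives 0, a2 odd gives 1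
      have hv1 : ∑ j ∈ range K, Real.cos ((j:ℝ)*(a1:ℝ)*π/(K:ℝ)) = 0 := by
        apply cos_sum_even_val K hK a1
        · obtain ⟨c, hcc⟩ := hpar
          exact ⟨(c:ℤ)+1, by rw [ha1]; push_cast; omega⟩
        · apply not_dvd_of_bounds
          · rw [ha1]; intro hcon; omega
          · rw [ha1, abs_of_nonneg (by push_cast; omega)]
            push_cast; omega
      have hv2 : ∑ j ∈ range K, Real.cos ((j:ℝ)*(a2:ℝ)*π/(K:ℝ)) = 1 := by
        apply cos_sum_odd_val K hK a2
        obtain ⟨c, hcc⟩ := hpar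
        rcases Nat.even_or_odd t with hte | hto
        · obtain ⟨u, hu⟩ := hte
          exact ⟨(u:ℤ) - ((c:ℤ) - u) - 1, by rw [ha2]; push_cast; omega⟩
        · obtain ⟨u, hu⟩ := hto
          exact ⟨(u:ℤ) - ((c:ℤ) - u), by rw [ha2]; push_cast; omega⟩
      rw [hv1, hv2]; ring

/-- DCT-I orthogonality with boundary weights -/
lemma Glem (K : ℕ) (hK : 0 < K) (σ σ' : ℕ) (hσ1 : 1 ≤ σ) (hσK : σ ≤ K)
    (hσ'1 : 1 ≤ σ') (hσ'K : σ' ≤ K) :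
    ∑ p ∈ range (K+1), (if p = 0 ∨ p = K then (1/2:ℝ) else 1) *
        (Real.cos (p*σ*π/K) * Real.cos (p*σ'*π/K))
      = if σ = σ' then (if σ = K then (K:ℝ) else (K:ℝ)/2) else 0 := by
  have hKne : (K:ℝ) ≠ 0 := by positivity
  set a1 : ℤ := ((σ:ℤ)+σ') with ha1
  set a2 : ℤ := ((σ:ℤ)-σ') with ha2
  have hterm : ∀ p ∈ range (K+1), (if p = 0 ∨ p = K then (1/2:ℝ) else 1) *
      (Real.cos ((p:ℝ)*(σ:ℝ)*π/(K:ℝ)) * Real.cos ((p:ℝ)*(σ':ℝ)*π/(K:ℝ)))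
      = ((if p = 0 ∨ p = K then (1/2:ℝ) else 1) * Real.cos ((p:ℝ)*(a1:ℝ)*π/(K:ℝ))
        + (if p = 0 ∨ p = K then (1/2:ℝ) else 1) * Real.cos ((p:ℝ)*(a2:ℝ)*π/(K:ℝ)))/2 := by
    intro p _
    rw [cos_mul_cos]
    have e1 : (p:ℝ)*(σ:ℝ)*π/(K:ℝ) + (p:ℝ)*(σ':ℝ)*π/(K:ℝ) = (p:ℝ)*(a1:ℝ)*π/(K:ℝ) := by
      rw [ha1]; push_cast; field_simp
    have e2 : (p:ℝ)*(σ:ℝ)*π/(K:ℝ) - (p:ℝ)*(σ':ℝ)*π/(K:ℝ) = (p:ℝ)*(a2:ℝ)*π/(K:ℝ) := by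
      rw [ha2]; push_cast; field_simp
    rw [e1, e2]; ring
  rw [Finset.sum_congr rfl hterm]
  have hsplit : ∑ p ∈ range (K+1), ((if p = 0 ∨ p = K then (1/2:ℝ) else 1) * Real.cos ((p:ℝ)*(a1:ℝ)*π/(K:ℝ))
        + (if p = 0 ∨ p = K then (1/2:ℝ) else 1) * Real.cos ((p:ℝ)*(a2:ℝ)*π/(K:ℝ)))/2
      = ((∑ p ∈ range (K+1), (if p = 0 ∨ p = K then (1/2:ℝ) else 1) * Real.cos ((p:ℝ)*(a1:ℝ)*π/(K:ℝ)))
        + ∑ p ∈ range (K+1), (if p = 0 ∨ p = K then (1/2:ℝ) else 1) * Real.cos ((p:ℝ)*(a2:ℝ)*π/(K:ℝ)))/2 := by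
    rw [← Finset.sum_add_distrib, ← Finset.sum_div]
  rw [hsplit, wt_cos_sum K hK a1, wt_cos_sum K hK a2]
  by_cases hss : σ = σ'
  · subst hss
    rw [if_pos rfl]
    have h2 : (2*(K:ℤ)) ∣ a2 := by rw [ha2]; simp
    rw [if_pos h2]
    by_cases hsK : σ = K
    · subst hsK
      rw [if_pos rfl, if_pos (by rw [ha1]; exact ⟨1, by ring⟩)]
      ring
    · rw [if_neg hsK, if_neg (by
        apply not_dvd_of_bounds
        · rw [ha1]; intro hcon; omega
        · rw [ha1, abs_of_nonneg (by push_cast; omega)]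
          push_cast
          omega)]
      ring
  · rw [if_neg hss]
    have h1 : ¬ (2*(K:ℤ)) ∣ a1 := by
      apply not_dvd_of_bounds
      · rw [ha1]; intro hcon; omega
      · rw [ha1, abs_of_nonneg (by push_cast; omega)]
        push_cast
        have : σ + σ' < 2*K := by omega
        exact_mod_cast this
    have h2 : ¬ (2*(K:ℤ)) ∣ a2 := by
      apply not_dvd_of_bounds
      · rw [ha2]; intro hcon; apply hss; omega
      · rw [ha2, abs_sub_lt_iff]
        constructor <;> push_cast <;> omega
    rw [if_neg h1, if_neg h2]
    ring

/-- inversion for the odd (DCT-III) part -/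
lemma inv_odd (K : ℕ) (hK : 0 < K) (u : ℕ → ℝ) (t : ℕ) (ht : t < K) :
    ∑ j ∈ range K, (Real.cos (j*(2*t+1)*π/(2*K)) - Real.cos (j*(2*(0:ℕ)+1)*π/(2*K))) *
        (∑ t' ∈ range K, u t' * Real.cos (j*(2*t'+1)*π/(2*K)))
      = (K:ℝ)/2 * (u t - u 0) := by
  have hstep : ∀ t' ∈ range K,
      ∑ j ∈ range K, (Real.cos ((j:ℝ)*(2*(t:ℝ)+1)*π/(2*(K:ℝ))) - Real.cos ((j:ℝ)*(2*((0:ℕ):ℝ)+1)*π/(2*(K:ℝ)))) *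
          Real.cos ((j:ℝ)*(2*(t':ℝ)+1)*π/(2*(K:ℝ)))
      = (if t = t' then (K:ℝ)/2 else 0) - (if 0 = t' then (K:ℝ)/2 else 0) := by
    intro t' ht'
    have e : ∀ j ∈ range K, (Real.cos ((j:ℝ)*(2*(t:ℝ)+1)*π/(2*(K:ℝ))) - Real.cos ((j:ℝ)*(2*((0:ℕ):ℝ)+1)*π/(2*(K:ℝ)))) *
          Real.cos ((j:ℝ)*(2*(t':ℝ)+1)*π/(2*(K:ℝ)))
        = Real.cos ((j:ℝ)*(2*(t:ℝ)+1)*π/(2*(K:ℝ))) * Real.cos ((j:ℝ)*(2*(t':ℝ)+1)*π/(2*(K:ℝ)))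
          - Real.cos ((j:ℝ)*(2*((0:ℕ):ℝ)+1)*π/(2*(K:ℝ))) * Real.cos ((j:ℝ)*(2*(t':ℝ)+1)*π/(2*(K:ℝ))) := by
      intro j _; ring
    rw [Finset.sum_congr rfl e, Finset.sum_sub_distrib,
        Hlem K hK t t' ht (Finset.mem_range.mp ht'),
        Hlem K hK 0 t' hK (Finset.mem_range.mp ht')]
    ring
  have swap1 : ∑ j ∈ range K, (Real.cos ((j:ℝ)*(2*(t:ℝ)+1)*π/(2*(K:ℝ))) - Real.cos ((j:ℝ)*(2*((0:ℕ):ℝ)+1)*π/(2*(K:ℝ)))) *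
        (∑ t' ∈ range K, u t' * Real.cos ((j:ℝ)*(2*(t':ℝ)+1)*π/(2*(K:ℝ))))
      = ∑ t' ∈ range K, u t' *
          (∑ j ∈ range K, (Real.cos ((j:ℝ)*(2*(t:ℝ)+1)*π/(2*(K:ℝ))) - Real.cos ((j:ℝ)*(2*((0:ℕ):ℝ)+1)*π/(2*(K:ℝ)))) *
            Real.cos ((j:ℝ)*(2*(t':ℝ)+1)*π/(2*(K:ℝ)))) := by
    have lhs_eq : ∀ j ∈ range K, (Real.cos ((j:ℝ)*(2*(t:ℝ)+1)*π/(2*(K:ℝ))) - Real.cos ((j:ℝ)*(2*((0:ℕ):ℝ)+1)*π/(2*(K:ℝ)))) *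
        (∑ t' ∈ range K, u t' * Real.cos ((j:ℝ)*(2*(t':ℝ)+1)*π/(2*(K:ℝ))))
        = ∑ t' ∈ range K, u t' * ((Real.cos ((j:ℝ)*(2*(t:ℝ)+1)*π/(2*(K:ℝ))) - Real.cos ((j:ℝ)*(2*((0:ℕ):ℝ)+1)*π/(2*(K:ℝ)))) *
            Real.cos ((j:ℝ)*(2*(t':ℝ)+1)*π/(2*(K:ℝ)))) := by
      intro j _
      rw [Finset.mul_sum]
      exact Finset.sum_congr rfl (fun t' _ => by ring)
    rw [Finset.sum_congr rfl lhs_eq, Finset.sum_comm]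
    exact Finset.sum_congr rfl (fun t' _ => by rw [Finset.mul_sum])
  rw [swap1, Finset.sum_congr rfl (fun t' ht' => by rw [hstep t' ht'])]
  have split : ∑ t' ∈ range K, u t' * ((if t = t' then (K:ℝ)/2 else 0) - (if 0 = t' then (K:ℝ)/2 else 0))
      = (∑ t' ∈ range K, u t' * (if t = t' then (K:ℝ)/2 else 0))
        - ∑ t' ∈ range K, u t' * (if 0 = t' then (K:ℝ)/2 else 0) := by
    rw [← Finset.sum_sub_distrib]
    exact Finset.sum_congr rfl (fun t' _ => by ring)
  rw [split]
  have h1 : ∑ t' ∈ range K, u t' * (if t = t' then (K:ℝ)/2 else 0) = u t * ((K:ℝ)/2) := by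
    rw [Finset.sum_eq_single t (fun b _ hb => by rw [if_neg (fun h => hb h.symm), mul_zero])
      (fun h => absurd (Finset.mem_range.mpr ht) h), if_pos rfl]
  have h2 : ∑ t' ∈ range K, u t' * (if 0 = t' then (K:ℝ)/2 else 0) = u 0 * ((K:ℝ)/2) := by
    rw [Finset.sum_eq_single 0 (fun b _ hb => by rw [if_neg (fun h => hb h.symm), mul_zero])
      (fun h => absurd (Finset.mem_range.mpr hK) h), if_pos rfl]
  rw [h1, h2]
  ring

/-- inversion for the even (DCT-I) part -/
lemma inv_even (K : ℕ) (hK : 0 < K) (w : ℕ → ℝ) (s : ℕ) (hs : s < K) :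
    ∑ p ∈ range (K+1), (if p = 0 ∨ p = K then (1/2:ℝ) else 1) *
        ((∑ s' ∈ range K, w s' * Real.cos (p*(s'+1)*π/K)) * Real.cos (p*(s+1)*π/K))
      = (if s+1 = K then (K:ℝ) else (K:ℝ)/2) * w s := by
  have swap1 : ∑ p ∈ range (K+1), (if p = 0 ∨ p = K then (1/2:ℝ) else 1) *
        ((∑ s' ∈ range K, w s' * Real.cos ((p:ℝ)*((s':ℝ)+1)*π/(K:ℝ))) * Real.cos ((p:ℝ)*((s:ℝ)+1)*π/(K:ℝ)))
      = ∑ s' ∈ range K, w s' *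
          (∑ p ∈ range (K+1), (if p = 0 ∨ p = K then (1/2:ℝ) else 1) *
            (Real.cos ((p:ℝ)*((s':ℝ)+1)*π/(K:ℝ)) * Real.cos ((p:ℝ)*((s:ℝ)+1)*π/(K:ℝ)))) := by
    have lhs_eq : ∀ p ∈ range (K+1), (if p = 0 ∨ p = K then (1/2:ℝ) else 1) *
        ((∑ s' ∈ range K, w s' * Real.cos ((p:ℝ)*((s':ℝ)+1)*π/(K:ℝ))) * Real.cos ((p:ℝ)*((s:ℝ)+1)*π/(K:ℝ)))
        = ∑ s' ∈ range K, w s' * ((if p = 0 ∨ p = K then (1/2:ℝ) else 1) *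
            (Real.cos ((p:ℝ)*((s':ℝ)+1)*π/(K:ℝ)) * Real.cos ((p:ℝ)*((s:ℝ)+1)*π/(K:ℝ)))) := by
      intro p _
      rw [Finset.sum_mul, Finset.mul_sum]
      exact Finset.sum_congr rfl (fun s' _ => by ring)
    rw [Finset.sum_congr rfl lhs_eq, Finset.sum_comm]
    exact Finset.sum_congr rfl (fun s' _ => by rw [Finset.mul_sum])
  rw [swap1]
  have hstep : ∀ s' ∈ range K,
      ∑ p ∈ range (K+1), (if p = 0 ∨ p = K then (1/2:ℝ) else 1) *
        (Real.cos ((p:ℝ)*((s':ℝ)+1)*π/(K:ℝ)) * Real.cos ((p:ℝ)*((s:ℝ)+1)*π/(K:ℝ)))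
      = if s' = s then (if s+1 = K then (K:ℝ) else (K:ℝ)/2) else 0 := by
    intro s' hs'
    have hs'K := Finset.mem_range.mp hs'
    have := Glem K hK (s'+1) (s+1) (by omega) (by omega) (by omega) (by omega)
    have harg1 : ∀ p:ℕ, ((p:ℝ)*((s'+1:ℕ):ℝ)*π/(K:ℝ)) = ((p:ℝ)*((s':ℝ)+1)*π/(K:ℝ)) := by
      intro p; push_cast; ring
    have harg2 : ∀ p:ℕ, ((p:ℝ)*((s+1:ℕ):ℝ)*π/(K:ℝ)) = ((p:ℝ)*((s:ℝ)+1)*π/(K:ℝ)) := by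
      intro p; push_cast; ring
    simp only [harg1, harg2] at this
    rw [this]
    by_cases h : s'+1 = s+1
    · have h' : s' = s := by omega
      rw [if_pos h, if_pos h']
      by_cases h2 : s'+1 = K
      · rw [if_pos h2, if_pos (by omega)]
      · rw [if_neg h2, if_neg (by omega)]
    · rw [if_neg h, if_neg (by omega)]
  rw [Finset.sum_congr rfl (fun s' hs' => by rw [hstep s' hs'] :
    ∀ s' ∈ range K, w s' * (∑ p ∈ range (K+1), (if p = 0 ∨ p = K then (1/2:ℝ) else 1) *
        (Real.cos ((p:ℝ)*((s':ℝ)+1)*π/(K:ℝ)) * Real.cos ((p:ℝ)*((s:ℝ)+1)*π/(K:ℝ))))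
      = w s' * (if s' = s then (if s+1 = K then (K:ℝ) else (K:ℝ)/2) else 0)),
    Finset.sum_eq_single s (fun b _ hb => by rw [if_neg hb, mul_zero])
      (fun h => absurd (Finset.mem_range.mpr hs) h), if_pos rfl]
  ring


lemma cos_half_shift_mul (r : ℕ) (x y : ℝ) :
    Real.cos ((2*(r:ℝ)+1)*π/2 - x) * Real.cos ((2*(r:ℝ)+1)*π/2 - y) = Real.sin x * Real.sin y := by
  induction r with
  | zero =>
      have e : ∀ z:ℝ, (2*((0:ℕ):ℝ)+1)*π/2 - z = π/2 - z := by intro z; push_cast; ring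
      rw [e x, e y, Real.cos_pi_div_two_sub, Real.cos_pi_div_two_sub]
  | succ r ih =>
      have e : ∀ z:ℝ, (2*((r+1:ℕ):ℝ)+1)*π/2 - z = ((2*(r:ℝ)+1)*π/2 - z) + π := by
        intro z; push_cast; ring
      rw [e x, e y, Real.cos_add_pi, Real.cos_add_pi]
      rw [← ih]; ring

lemma sin_shift_mul (r : ℕ) (x y : ℝ) :
    Real.sin ((r:ℝ)*π - x) * Real.sin ((r:ℝ)*π - y) = Real.sin x * Real.sin y := by
  induction r with
  | zero =>
      have e : ∀ z:ℝ, ((0:ℕ):ℝ)*π - z = -z := by intro z; push_cast; ring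
      rw [e x, e y, Real.sin_neg, Real.sin_neg]; ring
  | succ r ih =>
      have e : ∀ z:ℝ, ((r+1:ℕ):ℝ)*π - z = ((r:ℝ)*π - z) + π := by
        intro z; push_cast; ring
      rw [e x, e y, Real.sin_add_pi, Real.sin_add_pi]
      rw [← ih]; ring

lemma tl1 (θ : ℝ) (n : ℕ) :
    Real.cos (((n:ℝ)+1)*θ) * Real.sin ((n:ℝ)*θ) * Real.sin θ
      = Real.sin θ^2 * ∑ j ∈ range n, Real.cos (2*((j:ℝ)+1)*θ) := by
  induction n with
  | zero => simp
  | succ n ih =>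
      rw [Finset.sum_range_succ, mul_add]
      have key : ∀ A t : ℝ, Real.cos (A+t) * Real.sin A * Real.sin t
          = Real.cos A * Real.sin (A-t) * Real.sin t + Real.sin t^2 * Real.cos (2*A) := by
        intro A t
        rw [Real.cos_add, Real.sin_sub, Real.cos_two_mul]
        nlinarith [Real.sin_sq_add_cos_sq A]
      have e1 : (((n+1:ℕ)):ℝ)+1 = ((n:ℝ)+1) + 1 := by push_cast; ring
      have e1' : ((((n:ℝ)+1)+1))*θ = (((n:ℝ)+1)*θ) + θ := by ring
      have e2 : ((n+1:ℕ):ℝ)*θ = ((n:ℝ)+1)*θ := by push_cast; ring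
      have e3 : (((n:ℝ)+1)*θ) - θ = (n:ℝ)*θ := by ring
      have e4 : Real.cos (2*(((n:ℝ)+1)*θ)) = Real.cos (2*((n:ℝ)+1)*θ) := by
        congr 1; ring
      rw [e1, e1', e2, key (((n:ℝ)+1)*θ) θ, e3, ih, e4]

lemma ff_S1 (K : ℕ) (hK : 0 < K) (n : ℕ) (q : ℕ) :
    ff (4*K) 0 ((n:ℤ)+1) (2*(K:ℤ)-n) (2*(K:ℤ)-1) q
      = if Odd q then Real.sin ((q:ℝ)*π/(4*(K:ℝ)))^2 *
          ∑ j ∈ range n, Real.cos (((j:ℝ)+1)*(q:ℝ)*π/(2*(K:ℝ))) else 0 := by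
  have hKne : ((4*K:ℕ):ℝ) ≠ 0 := by positivity
  have hKne' : (K:ℝ) ≠ 0 := by positivity
  rcases Nat.even_or_odd q with he | ho
  · rw [ff, if_neg (Nat.not_odd_iff_even.mpr he), if_neg (Nat.not_odd_iff_even.mpr he)]
    have h0 : ss (4*K) (0 * q) = 0 := by rw [ss]; norm_num
    rw [h0]; ring
  · rw [ff, if_pos ho, if_pos ho]
    obtain ⟨r, hr⟩ := ho
    set θ : ℝ := (q:ℝ)*π/(4*(K:ℝ)) with hθ
    have h1 : cc (4*K) (0 * q) = 1 := by rw [cc]; norm_num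
    have h2 : cc (4*K) ((2*(K:ℤ)-n) * q) = Real.cos ((2*(r:ℝ)+1)*π/2 - (n:ℝ)*θ) := by
      rw [cc]; congr 1
      rw [hθ]; push_cast [hr]; field_simp; ring
    have h2' : cc (4*K) ((2*(K:ℤ)-1) * q) = Real.cos ((2*(r:ℝ)+1)*π/2 - θ) := by
      rw [cc]; congr 1
      rw [hθ]; push_cast [hr]; field_simp; ring
    have h3 : cc (4*K) (((n:ℤ)+1) * q) = Real.cos (((n:ℝ)+1)*θ) := by
      rw [cc]; congr 1
      rw [hθ]; push_cast; field_simp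
    calc cc (4*K) (0 * q) * cc (4*K) (((n:ℤ)+1) * q) * cc (4*K) ((2*(K:ℤ)-n) * q) * cc (4*K) ((2*(K:ℤ)-1) * q)
        = cc (4*K) (0 * q) * cc (4*K) (((n:ℤ)+1) * q) *
            (cc (4*K) ((2*(K:ℤ)-n) * q) * cc (4*K) ((2*(K:ℤ)-1) * q)) := by ring
      _ = 1 * Real.cos (((n:ℝ)+1)*θ) *
            (Real.cos ((2*(r:ℝ)+1)*π/2 - (n:ℝ)*θ) * Real.cos ((2*(r:ℝ)+1)*π/2 - θ)) := by
          rw [h1, h2, h2', h3]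
      _ = Real.cos (((n:ℝ)+1)*θ) * Real.sin ((n:ℝ)*θ) * Real.sin θ := by
          rw [cos_half_shift_mul]; ring
      _ = Real.sin θ^2 * ∑ j ∈ range n, Real.cos (2*((j:ℝ)+1)*θ) := tl1 θ n
      _ = Real.sin θ^2 * ∑ j ∈ range n, Real.cos (((j:ℝ)+1)*(q:ℝ)*π/(2*(K:ℝ))) := by
          congr 1
          apply Finset.sum_congr rfl
          intro j _
          congr 1
          rw [hθ]; field_simp; ring

lemma ff_S2 (K : ℕ) (hK : 0 < K) (m : ℤ) (q : ℕ) :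
    (-1:ℝ)^(q+1) * ff (4*K) (2-m) m (2*(K:ℤ)-1) (2*(K:ℤ)-1) q
      = Real.sin ((q:ℝ)*π/(4*(K:ℝ)))^2 *
          (Real.cos ((q:ℝ)*π/(2*(K:ℝ))) + (-1:ℝ)^(q+1) * Real.cos (((m:ℝ)-1)*(q:ℝ)*π/(2*(K:ℝ)))) / 2 := by
  have hKne : ((4*K:ℕ):ℝ) ≠ 0 := by positivity
  have hKne' : (K:ℝ) ≠ 0 := by positivity
  set θ : ℝ := (q:ℝ)*π/(4*(K:ℝ)) with hθ
  rcases Nat.even_or_odd q with he | ho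
  · obtain ⟨r, hr⟩ := he
    have hqodd : ¬ Odd q := Nat.not_odd_iff_even.mpr ⟨r, hr⟩
    have hsgn : (-1:ℝ)^(q+1) = -1 := Odd.neg_one_pow (by exact Even.add_one ⟨r, hr⟩)
    rw [ff, if_neg hqodd, hsgn]
    have h2 : ss (4*K) ((2*(K:ℤ)-1) * q) = Real.sin ((r:ℝ)*π - θ) := by
      rw [ss]; congr 1
      rw [hθ]; push_cast [hr]; field_simp; ring
    have h3 : ss (4*K) ((2-m) * q) * ss (4*K) (m * q)
        = (Real.cos (((m:ℝ)-1)*(q:ℝ)*π/(2*(K:ℝ))) - Real.cos ((q:ℝ)*π/(2*(K:ℝ))))/2 := by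
      rw [ss, ss]
      have hsin : ∀ x y : ℝ, Real.sin x * Real.sin y = (Real.cos (x-y) - Real.cos (x+y))/2 := by
        intro x y; rw [Real.cos_sub, Real.cos_add]; ring
      rw [hsin]
      have e1 : (((2-m)*q:ℤ):ℝ) * π / ((4*K:ℕ):ℝ) - ((m*q:ℤ):ℝ) * π / ((4*K:ℕ):ℝ)
          = -((((m:ℝ)-1))*(q:ℝ)*π/(2*(K:ℝ))) := by push_cast; field_simp; ring
      have e2 : (((2-m)*q:ℤ):ℝ) * π / ((4*K:ℕ):ℝ) + ((m*q:ℤ):ℝ) * π / ((4*K:ℕ):ℝ)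
          = (q:ℝ)*π/(2*(K:ℝ)) := by push_cast; field_simp; ring
      rw [e1, e2, Real.cos_neg]
    calc -1 * (ss (4*K) ((2-m) * q) * ss (4*K) (m * q) * ss (4*K) ((2*(K:ℤ)-1) * q) * ss (4*K) ((2*(K:ℤ)-1) * q))
        = -1 * ((ss (4*K) ((2-m) * q) * ss (4*K) (m * q)) *
            (ss (4*K) ((2*(K:ℤ)-1) * q) * ss (4*K) ((2*(K:ℤ)-1) * q))) := by ring
      _ = -1 * ((Real.cos (((m:ℝ)-1)*(q:ℝ)*π/(2*(K:ℝ))) - Real.cos ((q:ℝ)*π/(2*(K:ℝ))))/2 *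
            (Real.sin θ * Real.sin θ)) := by rw [h2, h3, sin_shift_mul]
      _ = Real.sin θ^2 *
          (Real.cos ((q:ℝ)*π/(2*(K:ℝ))) + (-1) * Real.cos (((m:ℝ)-1)*(q:ℝ)*π/(2*(K:ℝ)))) / 2 := by ring
  · obtain ⟨r, hr⟩ := ho
    have hsgn : (-1:ℝ)^(q+1) = 1 := Even.neg_one_pow (by rw [hr]; exact ⟨r+1, by ring⟩)
    rw [ff, if_pos ⟨r, hr⟩, hsgn, one_mul]
    have h2 : cc (4*K) ((2*(K:ℤ)-1) * q) = Real.cos ((2*(r:ℝ)+1)*π/2 - θ) := by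
      rw [cc]; congr 1
      rw [hθ]; push_cast [hr]; field_simp; ring
    have h3 : cc (4*K) ((2-m) * q) * cc (4*K) (m * q)
        = (Real.cos (((m:ℝ)-1)*(q:ℝ)*π/(2*(K:ℝ))) + Real.cos ((q:ℝ)*π/(2*(K:ℝ))))/2 := by
      rw [cc, cc]
      have hcos : ∀ x y : ℝ, Real.cos x * Real.cos y = (Real.cos (x-y) + Real.cos (x+y))/2 := by
        intro x y; rw [Real.cos_sub, Real.cos_add]; ring
      rw [hcos]
      have e1 : (((2-m)*q:ℤ):ℝ) * π / ((4*K:ℕ):ℝ) - ((m*q:ℤ):ℝ) * π / ((4*K:ℕ):ℝ)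
          = -((((m:ℝ)-1))*(q:ℝ)*π/(2*(K:ℝ))) := by push_cast; field_simp; ring
      have e2 : (((2-m)*q:ℤ):ℝ) * π / ((4*K:ℕ):ℝ) + ((m*q:ℤ):ℝ) * π / ((4*K:ℕ):ℝ)
          = (q:ℝ)*π/(2*(K:ℝ)) := by push_cast; field_simp; ring
      rw [e1, e2, Real.cos_neg]
    calc cc (4*K) ((2-m) * q) * cc (4*K) (m * q) * cc (4*K) ((2*(K:ℤ)-1) * q) * cc (4*K) ((2*(K:ℤ)-1) * q)
        = (cc (4*K) ((2-m) * q) * cc (4*K) (m * q)) *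
            (cc (4*K) ((2*(K:ℤ)-1) * q) * cc (4*K) ((2*(K:ℤ)-1) * q)) := by ring
      _ = (Real.cos (((m:ℝ)-1)*(q:ℝ)*π/(2*(K:ℝ))) + Real.cos ((q:ℝ)*π/(2*(K:ℝ))))/2 *
            (Real.sin θ * Real.sin θ) := by rw [h2, h3, cos_half_shift_mul]
      _ = Real.sin θ^2 *
          (Real.cos ((q:ℝ)*π/(2*(K:ℝ))) + 1 * Real.cos (((m:ℝ)-1)*(q:ℝ)*π/(2*(K:ℝ)))) / 2 := by ring


/-- extension of a `Fin (N/2)`-vector to `ℕ` -/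
noncomputable def Dof (N : ℕ) (b : Fin (N/2) → ℝ) (q : ℕ) : ℝ :=
  if h : q < N/2 then b ⟨q,h⟩ else 0

lemma psi_eq (N : ℕ) (b : Fin (N/2) → ℝ) (i j k l : ℤ) :
    psi N b i j k l = -∑ q ∈ range (N/2), (-1:ℝ)^(q+1) * Dof N b q * ff N i j k l (q+1) := by
  rw [psi]
  congr 1
  rw [← Fin.sum_univ_eq_sum_range (fun q => (-1:ℝ)^(q+1) * Dof N b q * ff N i j k l (q+1)) (N/2)]
  apply Finset.sum_congr rfl
  intro q _
  simp only [Dof, dif_pos q.is_lt, Fin.eta]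

/-- the natural `V`-weights -/
noncomputable def Vw (K : ℕ) (D : ℕ → ℝ) (q : ℕ) : ℝ :=
  D q * Real.sin (((q:ℝ)+1)*π/(4*(K:ℝ)))^2

lemma sin_node_pos (K : ℕ) (hK : 0 < K) (x : ℝ) (hx1 : 0 < x) (hx2 : x ≤ 2*K) :
    0 < Real.sin (x*π/(4*(K:ℝ))) := by
  apply Real.sin_pos_of_pos_of_lt_pi
  · positivity
  · have hKpos : (0:ℝ) < K := by exact_mod_cast hK
    rw [div_lt_iff₀ (by positivity)]
    nlinarith [Real.pi_pos]

/-- reduction of the S1-equations -/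
lemma red1 (K : ℕ) (hK : 0 < K) (D : ℕ → ℝ) (n : ℕ) :
    -∑ q ∈ range (2*K), (-1:ℝ)^(q+1) * D q * ff (4*K) 0 ((n:ℤ)+1) (2*(K:ℤ)-n) (2*(K:ℤ)-1) (q+1)
      = ∑ j ∈ range n, ∑ t ∈ range K,
          Vw K D (2*t) * Real.cos (((j:ℝ)+1)*(2*(t:ℝ)+1)*π/(2*(K:ℝ))) := by
  rw [sum_range_double K (fun q => (-1:ℝ)^(q+1) * D q * ff (4*K) 0 ((n:ℤ)+1) (2*(K:ℤ)-n) (2*(K:ℤ)-1) (q+1))]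
  have hterm : ∀ t ∈ range K,
      ((-1:ℝ)^(2*t+1) * D (2*t) * ff (4*K) 0 ((n:ℤ)+1) (2*(K:ℤ)-n) (2*(K:ℤ)-1) (2*t+1)
        + (-1:ℝ)^(2*t+1+1) * D (2*t+1) * ff (4*K) 0 ((n:ℤ)+1) (2*(K:ℤ)-n) (2*(K:ℤ)-1) (2*t+1+1))
      = -(Vw K D (2*t) * ∑ j ∈ range n, Real.cos (((j:ℝ)+1)*(2*(t:ℝ)+1)*π/(2*(K:ℝ)))) := by
    intro t _
    have hodd : Odd (2*t+1) := ⟨t, by ring⟩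
    have heven : ¬ Odd (2*t+1+1) := by simp [Nat.odd_iff]; omega
    rw [ff_S1 K hK n (2*t+1), ff_S1 K hK n (2*t+1+1), if_pos hodd, if_neg heven]
    have hsgn : (-1:ℝ)^(2*t+1) = -1 := Odd.neg_one_pow hodd
    rw [hsgn]
    have e1 : ((2*t+1:ℕ):ℝ) = 2*(t:ℝ)+1 := by push_cast; ring
    rw [e1]
    have e2 : ∑ j ∈ range n, Real.cos (((j:ℝ)+1)*(2*(t:ℝ)+1)*π/(2*(K:ℝ)))
        = ∑ j ∈ range n, Real.cos (((j:ℝ)+1)*(2*(t:ℝ)+1)*π/(2*(K:ℝ))) := rfl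
    rw [Vw]
    have e3 : ((2*t:ℕ):ℝ)+1 = 2*(t:ℝ)+1 := by push_cast; ring
    rw [e3]
    ring
  rw [Finset.sum_congr rfl hterm, Finset.sum_neg_distrib, neg_neg]
  have hms : ∀ t ∈ range K, Vw K D (2*t) * ∑ j ∈ range n, Real.cos (((j:ℝ)+1)*(2*(t:ℝ)+1)*π/(2*(K:ℝ)))
      = ∑ j ∈ range n, Vw K D (2*t) * Real.cos (((j:ℝ)+1)*(2*(t:ℝ)+1)*π/(2*(K:ℝ))) :=
    fun t _ => Finset.mul_sum _ _ _
  rw [Finset.sum_congr rfl hms, Finset.sum_comm]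

/-- reduction of the S2-equations -/
lemma red2 (K : ℕ) (hK : 0 < K) (D : ℕ → ℝ) (m : ℤ) :
    -∑ q ∈ range (2*K), (-1:ℝ)^(q+1) * D q * ff (4*K) (2-m) m (2*(K:ℤ)-1) (2*(K:ℤ)-1) (q+1)
      = (1/2) * ((∑ q ∈ range (2*K), Vw K D q * Real.cos (((q:ℝ)+1)*π/(2*(K:ℝ))))
          + ∑ q ∈ range (2*K), (-1:ℝ)^q * Vw K D q * Real.cos (((m:ℝ)-1)*((q:ℝ)+1)*π/(2*(K:ℝ)))) := by
  have hterm : ∀ q ∈ range (2*K),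
      (-1:ℝ)^(q+1) * D q * ff (4*K) (2-m) m (2*(K:ℤ)-1) (2*(K:ℤ)-1) (q+1)
      = -(1/2) * (Vw K D q * Real.cos (((q:ℝ)+1)*π/(2*(K:ℝ)))
          + (-1:ℝ)^q * Vw K D q * Real.cos (((m:ℝ)-1)*((q:ℝ)+1)*π/(2*(K:ℝ)))) := by
    intro q _
    have hE := ff_S2 K hK m (q+1)
    have hsgn : ((-1:ℝ)^(q+1+1)) = (-1:ℝ)^q := by rw [pow_succ, pow_succ]; ring
    rw [hsgn] at hE
    have e1 : ((q+1:ℕ):ℝ) = (q:ℝ)+1 := by push_cast; ring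
    rw [e1] at hE
    have hE' : ff (4*K) (2-m) m (2*(K:ℤ)-1) (2*(K:ℤ)-1) (q+1)
        = (-1:ℝ)^q * (Real.sin (((q:ℝ)+1)*π/(4*(K:ℝ)))^2 *
            (Real.cos (((q:ℝ)+1)*π/(2*(K:ℝ))) + (-1:ℝ)^q * Real.cos (((m:ℝ)-1)*((q:ℝ)+1)*π/(2*(K:ℝ)))) / 2) := by
      have hsq : ((-1:ℝ)^q)*((-1:ℝ)^q) = 1 := by
        rw [← pow_add]
        exact Even.neg_one_pow ⟨q, by ring⟩
      calc ff (4*K) (2-m) m (2*(K:ℤ)-1) (2*(K:ℤ)-1) (q+1)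
          = ((-1:ℝ)^q)*((-1:ℝ)^q) * ff (4*K) (2-m) m (2*(K:ℤ)-1) (2*(K:ℤ)-1) (q+1) := by rw [hsq]; ring
        _ = (-1:ℝ)^q * ((-1:ℝ)^q * ff (4*K) (2-m) m (2*(K:ℤ)-1) (2*(K:ℤ)-1) (q+1)) := by ring
        _ = _ := by rw [hE]
    rw [hE', Vw]
    have hsgn2 : (-1:ℝ)^(q+1) = -((-1:ℝ)^q) := by rw [pow_succ]; ring
    rw [hsgn2]
    have hsq : ((-1:ℝ)^q)*((-1:ℝ)^q) = 1 := by
      rw [← pow_add]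
      exact Even.neg_one_pow ⟨q, by ring⟩
    linear_combination (-(D q * Real.sin (((q:ℝ)+1)*π/(4*(K:ℝ)))^2 * Real.cos (((q:ℝ)+1)*π/(2*(K:ℝ))))/2
      - ((-1:ℝ)^q * D q * Real.sin (((q:ℝ)+1)*π/(4*(K:ℝ)))^2 * Real.cos (((m:ℝ)-1)*((q:ℝ)+1)*π/(2*(K:ℝ))))/2) * hsq
  rw [Finset.sum_congr rfl hterm]
  have e1 : ∑ q ∈ range (2*K), -(1/2) * (Vw K D q * Real.cos (((q:ℝ)+1)*π/(2*(K:ℝ)))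
      + (-1:ℝ)^q * Vw K D q * Real.cos (((m:ℝ)-1)*((q:ℝ)+1)*π/(2*(K:ℝ))))
      = -(1/2) * ∑ q ∈ range (2*K), (Vw K D q * Real.cos (((q:ℝ)+1)*π/(2*(K:ℝ)))
      + (-1:ℝ)^q * Vw K D q * Real.cos (((m:ℝ)-1)*((q:ℝ)+1)*π/(2*(K:ℝ)))) := by
    rw [← Finset.mul_sum]
  rw [e1, Finset.sum_add_distrib]
  ring


/-- cos shifted by nπ -/
lemma cos_add_nat_pi (n : ℕ) (x : ℝ) : Real.cos (x + n*π) = (-1:ℝ)^n * Real.cos x := by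
  induction n with
  | zero => simp
  | succ n ih =>
      have e : x + ((n+1:ℕ):ℝ)*π = (x + (n:ℝ)*π) + π := by push_cast; ring
      rw [e, Real.cos_add_pi, ih, pow_succ]
      ring

/-- shifted cosine sum -/
lemma shifted_cos_sum (M' : ℕ) (a : ℤ) (hnd : ¬ (2*((M'+1:ℕ):ℤ)) ∣ a) :
    ∑ q ∈ range M', Real.cos (((q:ℝ)+1)*(a:ℝ)*π/((M'+1:ℕ):ℝ))
      = (if Odd a then (1:ℝ) else 0) - 1 := by
  have hcs := cos_sum_int (M'+1) (by omega) a
  rw [if_neg hnd, Finset.sum_range_succ'] at hcs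
  have h0 : Real.cos (((0:ℕ):ℝ)*(a:ℝ)*π/((M'+1:ℕ):ℝ)) = 1 := by norm_num
  rw [h0] at hcs
  have hconv : ∀ q ∈ range M', Real.cos (((q+1:ℕ):ℝ)*(a:ℝ)*π/((M'+1:ℕ):ℝ))
      = Real.cos (((q:ℝ)+1)*(a:ℝ)*π/((M'+1:ℕ):ℝ)) := by
    intro q _; congr 2; push_cast; ring
  rw [Finset.sum_congr rfl hconv] at hcs
  linarith

/-- value of the weights for the explicit solution -/
lemma bsol_V (K : ℕ) (hK2 : 2 ≤ K) (b1 : ℝ) (q : ℕ) (hq : q < 2*K) :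
    Vw K (Dof (4*K) (bsol (4*K) b1)) q
      = if q+1 = 2*K then b1 * Real.sin (π/(4*(K:ℝ)))^2 / 2
        else b1 * Real.sin (π/(4*(K:ℝ)))^2 := by
  have hhalf : 4*K/2 = 2*K := by omega
  have hlt : q < 4*K/2 := by omega
  have hcast : ((4*K:ℕ):ℝ) = 4*(K:ℝ) := by push_cast; ring
  rw [Vw, Dof, dif_pos hlt]
  show (bsol (4*K) b1 ⟨q, hlt⟩) * Real.sin (((q:ℝ)+1)*π/(4*(K:ℝ)))^2 = _
  rw [bsol]
  simp only []
  rw [hhalf, hcast]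
  by_cases hq2 : q + 1 = 2*K
  · rw [if_pos hq2, if_pos hq2]
    have harg : ((q:ℝ)+1)*π/(4*(K:ℝ)) = π/2 := by
      have h7 : ((q:ℝ)+1) = 2*(K:ℝ) := by
        have := congrArg (fun n : ℕ => (n:ℝ)) hq2
        push_cast at this
        linarith
      rw [h7]
      have : (K:ℝ) ≠ 0 := by positivity
      field_simp
      ring
    rw [harg, Real.sin_pi_div_two]
    ring
  · rw [if_neg hq2, if_neg hq2]
    have hne : Real.sin (((q:ℝ)+1)*π/(4*(K:ℝ))) ≠ 0 := by
      have := sin_node_pos K (by omega) ((q:ℝ)+1) (by positivity) (by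
        have h8 : (q:ℝ) + 1 ≤ 2*(K:ℝ) := by
          have h9 : q + 1 ≤ 2*K := by omega
          exact_mod_cast h9
        exact h8)
      linarith
    field_simp
    exact mul_div_cancel_right₀ _ (by rw [mul_comm π]; exact hne)

/-- S1 equations hold for the explicit solution -/
lemma exist1 (K : ℕ) (hK2 : 2 ≤ K) (b1 : ℝ) (n : ℕ) (hn1 : 1 ≤ n) (hnK : n ≤ K-1) :
    -∑ q ∈ range (2*K), (-1:ℝ)^(q+1) * Dof (4*K) (bsol (4*K) b1) q *
        ff (4*K) 0 ((n:ℤ)+1) (2*(K:ℤ)-n) (2*(K:ℤ)-1) (q+1) = 0 := by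
  rw [red1 K (by omega) _ n]
  apply Finset.sum_eq_zero
  intro j hj
  simp only [Finset.mem_range] at hj
  have hV : ∀ t ∈ range K, Vw K (Dof (4*K) (bsol (4*K) b1)) (2*t) *
      Real.cos (((j:ℝ)+1)*(2*(t:ℝ)+1)*π/(2*(K:ℝ)))
      = (b1 * Real.sin (π/(4*(K:ℝ)))^2) * Real.cos (((j+1:ℕ):ℝ)*(2*(t:ℝ)+1)*π/(2*(K:ℝ))) := by
    intro t ht
    simp only [Finset.mem_range] at ht
    rw [bsol_V K hK2 b1 (2*t) (by omega), if_neg (by omega)]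
    congr 2
    push_cast; ring
  rw [Finset.sum_congr rfl hV, ← Finset.mul_sum]
  rw [cos_sum_odd_nodes K (by omega) (j+1) (by omega) (by omega)]
  ring

/-- S2 equations hold for the explicit solution -/
lemma exist2 (K : ℕ) (hK2 : 2 ≤ K) (b1 : ℝ) (m : ℤ)
    (hm : m = 1 ∨ (3 ≤ m ∧ m ≤ (K:ℤ)+1)) :
    -∑ q ∈ range (2*K), (-1:ℝ)^(q+1) * Dof (4*K) (bsol (4*K) b1) q *
        ff (4*K) (2-m) m (2*(K:ℤ)-1) (2*(K:ℤ)-1) (q+1) = 0 := by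
  rw [red2 K (by omega) _ m]
  set c : ℝ := b1 * Real.sin (π/(4*(K:ℝ)))^2 with hc
  set D := Dof (4*K) (bsol (4*K) b1) with hD
  have h2K1 : 2*K = (2*K-1)+1 := by omega
  have hKne : (K:ℝ) ≠ 0 := by positivity
  have hcast1 : ((2*K-1:ℕ):ℝ) = 2*(K:ℝ)-1 := by
    have : (2*K-1) + 1 = 2*K := by omega
    have := congrArg (fun n : ℕ => (n:ℝ)) this
    push_cast at this; linarith
  -- Sum1 = -c/2
  have hS1 : ∑ q ∈ range (2*K), Vw K D q * Real.cos (((q:ℝ)+1)*π/(2*(K:ℝ))) = -c/2 := by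
    rw [h2K1, Finset.sum_range_succ]
    have hlast : Vw K D (2*K-1) * Real.cos ((((2*K-1:ℕ):ℝ)+1)*π/(2*(K:ℝ))) = -(c/2) := by
      rw [hD, bsol_V K hK2 b1 (2*K-1) (by omega), if_pos (by omega), hcast1]
      have harg : ((2*(K:ℝ)-1)+1)*π/(2*(K:ℝ)) = π := by field_simp; ring
      rw [harg, Real.cos_pi, hc]
      ring
    rw [hlast]
    have hfront : ∀ q ∈ range (2*K-1), Vw K D q * Real.cos (((q:ℝ)+1)*π/(2*(K:ℝ)))
        = c * Real.cos (((q:ℝ)+1)*((1:ℤ):ℝ)*π/(((2*K-1)+1:ℕ):ℝ)) := by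
      intro q hq
      simp only [Finset.mem_range] at hq
      rw [hD, bsol_V K hK2 b1 q (by omega), if_neg (by omega), hc]
      congr 2
      have h10 : ((2*K-1)+1:ℕ) = 2*K := by omega
      rw [h10]
      push_cast
      ring
    rw [Finset.sum_congr rfl hfront, ← Finset.mul_sum]
    rw [shifted_cos_sum (2*K-1) 1 (by
      apply not_dvd_of_bounds
      · norm_num
      · have h11 : ((2*K-1)+1:ℕ) = 2*K := by omega
        rw [h11]
        simp only [abs_one]
        push_cast
        omega)]
    rw [if_pos ⟨0, by ring⟩]
    ring
  -- Sum2 = c/2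
  set a : ℤ := m + 2*(K:ℤ) - 1 with ha
  have hS2 : ∑ q ∈ range (2*K), (-1:ℝ)^q * Vw K D q * Real.cos (((m:ℝ)-1)*((q:ℝ)+1)*π/(2*(K:ℝ))) = c/2 := by
    have hflip : ∀ q ∈ range (2*K), (-1:ℝ)^q * Vw K D q * Real.cos (((m:ℝ)-1)*((q:ℝ)+1)*π/(2*(K:ℝ)))
        = -(Vw K D q * Real.cos (((q:ℝ)+1)*(a:ℝ)*π/(2*(K:ℝ)))) := by
      intro q hq
      have harg : ((q:ℝ)+1)*(a:ℝ)*π/(2*(K:ℝ))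
          = ((m:ℝ)-1)*((q:ℝ)+1)*π/(2*(K:ℝ)) + ((q+1:ℕ):ℝ)*π := by
        rw [ha]
        push_cast
        field_simp
        ring
      rw [harg, cos_add_nat_pi (q+1)]
      have h12 : (-1:ℝ)^(q+1) = -((-1:ℝ)^q) := by rw [pow_succ]; ring
      rw [h12]
      ring
    rw [Finset.sum_congr rfl hflip, Finset.sum_neg_distrib]
    rw [h2K1, Finset.sum_range_succ]
    have hnd : ¬ (2*(((2*K-1)+1:ℕ):ℤ)) ∣ a := by
      apply not_dvd_of_bounds
      · rw [ha]; omega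
      · rw [ha]
        have h11 : ((2*K-1)+1:ℕ) = 2*K := by omega
        rw [h11]
        rw [abs_of_pos (by omega)]
        push_cast
        omega
    have hfront : ∀ q ∈ range (2*K-1), Vw K D q * Real.cos (((q:ℝ)+1)*(a:ℝ)*π/(2*(K:ℝ)))
        = c * Real.cos (((q:ℝ)+1)*(a:ℝ)*π/(((2*K-1)+1:ℕ):ℝ)) := by
      intro q hq
      simp only [Finset.mem_range] at hq
      rw [hD, bsol_V K hK2 b1 q (by omega), if_neg (by omega), hc]
      congr 2
      have h10 : ((2*K-1)+1:ℕ) = 2*K := by omega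
      rw [h10]
      push_cast
      ring
    rw [Finset.sum_congr rfl hfront, ← Finset.mul_sum, shifted_cos_sum (2*K-1) a hnd]
    have hlast : Vw K D (2*K-1) * Real.cos ((((2*K-1:ℕ):ℝ)+1)*(a:ℝ)*π/(2*(K:ℝ)))
        = (c/2) * Real.cos ((a:ℝ)*π) := by
      rw [hD, bsol_V K hK2 b1 (2*K-1) (by omega), if_pos (by omega), hcast1]
      have harg : ((2*(K:ℝ)-1)+1)*(a:ℝ)*π/(2*(K:ℝ)) = (a:ℝ)*π := by
        field_simp
        ring
      rw [harg, hc]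
      try ring
    rw [hlast]
    rcases Int.even_or_odd m with hme | hmo
    · have hao : Odd a := by
        obtain ⟨u, hu⟩ := hme
        exact ⟨u + K - 1, by rw [ha, hu]; ring⟩
      rw [if_pos hao, cos_int_mul_pi_odd a hao]
      ring
    · have hae : ¬ Odd a := by
        rw [Int.not_odd_iff_even]
        obtain ⟨u, hu⟩ := hmo
        exact ⟨u + K, by rw [ha, hu]; ring⟩
      rw [if_neg hae]
      have hcos : Real.cos ((a:ℝ)*π) = 1 := by
        obtain ⟨u, hu⟩ := Int.not_odd_iff_even.mp hae
        have h13 : (a:ℝ)*π = 2*(u:ℝ)*π := by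
          rw [hu]; push_cast; ring
        rw [h13]
        exact_mod_cast cos_int_mul_pi_even u
      rw [hcos]
      ring
  rw [hS1, hS2]
  ring


/-- the homogeneous system has only the zero solution -/
lemma uniq_zero (K : ℕ) (hK2 : 2 ≤ K) (D : ℕ → ℝ) (hD0 : D 0 = 0)
    (h1 : ∀ n : ℕ, 1 ≤ n → n ≤ K-1 →
      ∑ j ∈ range n, ∑ t ∈ range K,
        Vw K D (2*t) * Real.cos (((j:ℝ)+1)*(2*(t:ℝ)+1)*π/(2*(K:ℝ))) = 0)
    (h2 : ∀ p : ℕ, (p = 0 ∨ (2 ≤ p ∧ p ≤ K)) →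
      (∑ q ∈ range (2*K), Vw K D q * Real.cos (((q:ℝ)+1)*π/(2*(K:ℝ))))
        + ∑ q ∈ range (2*K), (-1:ℝ)^q * Vw K D q * Real.cos ((p:ℝ)*((q:ℝ)+1)*π/(2*(K:ℝ))) = 0) :
    ∀ q, q < 2*K → D q = 0 := by
  have hK : 0 < K := by omega
  have hKne : (K:ℝ) ≠ 0 := by positivity
  set u : ℕ → ℝ := fun t => Vw K D (2*t) with hu
  -- A-functionals
  set A : ℕ → ℝ := fun j => ∑ t' ∈ range K, u t' * Real.cos ((j:ℝ)*(2*(t':ℝ)+1)*π/(2*(K:ℝ))) with hA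
  have hinner : ∀ j : ℕ, ∑ t ∈ range K, Vw K D (2*t) * Real.cos (((j:ℝ)+1)*(2*(t:ℝ)+1)*π/(2*(K:ℝ)))
      = A (j+1) := by
    intro j
    rw [hA]
    apply Finset.sum_congr rfl
    intro t _
    congr 2
    push_cast
    ring
  have hAzero : ∀ j : ℕ, 1 ≤ j → j ≤ K-1 → A j = 0 := by
    intro j hj1 hjK
    have e1 := h1 j hj1 hjK
    rw [Finset.sum_congr rfl (fun i _ => hinner i)] at e1
    by_cases hj : j = 1
    · subst hj
      simpa using e1
    · have e2 := h1 (j-1) (by omega) (by omega)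
      rw [Finset.sum_congr rfl (fun i _ => hinner i)] at e2
      have hsplit : ∑ i ∈ range j, A (i+1) = ∑ i ∈ range (j-1), A (i+1) + A j := by
        have hj' : j = (j-1)+1 := by omega
        rw [hj', Finset.sum_range_succ]
        have : (j-1)+1 = j := by omega
        rw [this]
      rw [hsplit] at e1
      linarith
  -- odd part zero
  have hu0 : u 0 = 0 := by
    rw [hu]
    simp only [Vw, Nat.mul_zero, hD0]
    ring
  have hodd : ∀ t, t < K → u t = 0 := by
    intro t ht
    have hio := inv_odd K hK u t ht
    have hlhs : ∑ j ∈ range K, (Real.cos ((j:ℝ)*(2*(t:ℝ)+1)*π/(2*(K:ℝ))) - Real.cos ((j:ℝ)*(2*((0:ℕ):ℝ)+1)*π/(2*(K:ℝ)))) *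
        (∑ t' ∈ range K, u t' * Real.cos ((j:ℝ)*(2*(t':ℝ)+1)*π/(2*(K:ℝ)))) = 0 := by
      apply Finset.sum_eq_zero
      intro j hj
      simp only [Finset.mem_range] at hj
      by_cases hj0 : j = 0
      · subst hj0
        simp
      · have : (∑ t' ∈ range K, u t' * Real.cos ((j:ℝ)*(2*(t':ℝ)+1)*π/(2*(K:ℝ)))) = 0 :=
          hAzero j (by omega) (by omega)
        rw [this, mul_zero]
    rw [hlhs] at hio
    rcases mul_eq_zero.mp hio.symm with h | h
    · exfalso
      have : (K:ℝ)/2 ≠ 0 := by positivity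
      exact this h
    · linarith [hu0]
  -- even part
  set w : ℕ → ℝ := fun s => Vw K D (2*s+1) with hw
  set E : ℕ → ℝ := fun p => ∑ s' ∈ range K, w s' * Real.cos ((p:ℝ)*((s':ℝ)+1)*π/(K:ℝ)) with hE
  have hS1E : ∑ q ∈ range (2*K), Vw K D q * Real.cos (((q:ℝ)+1)*π/(2*(K:ℝ))) = E 1 := by
    rw [sum_range_double K (fun q => Vw K D q * Real.cos (((q:ℝ)+1)*π/(2*(K:ℝ)))), hE]
    apply Finset.sum_congr rfl
    intro t ht
    simp only [Finset.mem_range] at ht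
    have hz : Vw K D (2*t) = 0 := hodd t ht
    rw [hz, zero_mul, zero_add]
    show w t * _ = w t * _
    congr 1
    have e1 : ((2*t+1:ℕ):ℝ)+1 = 2*((t:ℝ)+1) := by push_cast; ring
    rw [e1]
    have e2 : ((1:ℕ):ℝ) = 1 := by norm_num
    rw [e2]
    field_simp
  have hS2E : ∀ p : ℕ, ∑ q ∈ range (2*K), (-1:ℝ)^q * Vw K D q * Real.cos ((p:ℝ)*((q:ℝ)+1)*π/(2*(K:ℝ))) = -(E p) := by
    intro p
    rw [sum_range_double K (fun q => (-1:ℝ)^q * Vw K D q * Real.cos ((p:ℝ)*((q:ℝ)+1)*π/(2*(K:ℝ)))), hE]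
    rw [← Finset.sum_neg_distrib]
    apply Finset.sum_congr rfl
    intro t ht
    simp only [Finset.mem_range] at ht
    have hz : Vw K D (2*t) = 0 := hodd t ht
    rw [hz]
    have hsgn : (-1:ℝ)^(2*t+1) = -1 := Odd.neg_one_pow ⟨t, by ring⟩
    rw [hsgn]
    have harg : (p:ℝ)*(((2*t+1:ℕ):ℝ)+1)*π/(2*(K:ℝ)) = (p:ℝ)*((t:ℝ)+1)*π/(K:ℝ) := by
      push_cast
      field_simp
      ring
    rw [harg]
    show (-1:ℝ)^(2*t) * 0 * _ + (-1) * w t * _ = -(w t * _)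
    ring
  have hEp : ∀ p : ℕ, p ≤ K → E p = E 1 := by
    intro p hp
    by_cases hp1 : p = 1
    · rw [hp1]
    · have hcond : p = 0 ∨ (2 ≤ p ∧ p ≤ K) := by omega
      have := h2 p hcond
      rw [hS1E, hS2E p] at this
      linarith
  have heven : ∀ s, s < K → w s = 0 := by
    intro s hs
    have hie := inv_even K hK w s hs
    have hlhs : ∑ p ∈ range (K+1), (if p = 0 ∨ p = K then (1/2:ℝ) else 1) *
        ((∑ s' ∈ range K, w s' * Real.cos ((p:ℝ)*((s':ℝ)+1)*π/(K:ℝ))) * Real.cos ((p:ℝ)*((s:ℝ)+1)*π/(K:ℝ))) 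
        = E 1 * ∑ p ∈ range (K+1), (if p = 0 ∨ p = K then (1/2:ℝ) else 1) *
            Real.cos ((p:ℝ)*(((s:ℤ)+1):ℝ)*π/(K:ℝ)) := by
      rw [Finset.mul_sum]
      apply Finset.sum_congr rfl
      intro p hp
      simp only [Finset.mem_range] at hp
      have hEval : (∑ s' ∈ range K, w s' * Real.cos ((p:ℝ)*((s':ℝ)+1)*π/(K:ℝ))) = E 1 := by
        have : (∑ s' ∈ range K, w s' * Real.cos ((p:ℝ)*((s':ℝ)+1)*π/(K:ℝ))) = E p := rfl
        rw [this, hEp p (by omega)]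
      rw [hEval]
      have e1 : (((s:ℤ)+1):ℝ) = (s:ℝ)+1 := by push_cast; ring
      rw [e1]
      ring
    rw [hlhs] at hie
    have hnd : ¬ (2*(K:ℤ)) ∣ ((s:ℤ)+1) := by
      apply not_dvd_of_bounds
      · omega
      · rw [abs_of_pos (by omega)]
        omega
    have hconv : ∑ p ∈ range (K+1), (if p = 0 ∨ p = K then (1/2:ℝ) else 1) *
        Real.cos ((p:ℝ)*(((s:ℤ):ℝ)+1)*π/(K:ℝ)) = 0 := by
      have h20 := wt_cos_sum K hK ((s:ℤ)+1)
      rw [if_neg hnd] at h20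
      rw [← h20]
      apply Finset.sum_congr rfl
      intro p _
      congr 2
      push_cast
      ring
    rw [hconv, mul_zero] at hie
    have hfac : (0:ℝ) < if s+1 = K then (K:ℝ) else (K:ℝ)/2 := by
      by_cases h : s+1 = K
      · rw [if_pos h]; positivity
      · rw [if_neg h]; positivity
    have := hie.symm
    rcases mul_eq_zero.mp this with h | h
    · linarith
    · exact h
  -- combine
  intro q hq
  have hsin : Real.sin (((q:ℝ)+1)*π/(4*(K:ℝ))) ≠ 0 := by
    have hb : (q:ℝ)+1 ≤ 2*(K:ℝ) := by
      have : q+1 ≤ 2*K := by omega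
      exact_mod_cast this
    exact ne_of_gt (sin_node_pos K hK ((q:ℝ)+1) (by positivity) hb)
  have hVz : Vw K D q = 0 := by
    rcases Nat.even_or_odd q with he | ho
    · obtain ⟨t, ht⟩ := he
      have hq2 : q = 2*t := by omega
      rw [hq2]
      exact hodd t (by omega)
    · obtain ⟨t, ht⟩ := ho
      have hq2 : q = 2*t+1 := by omega
      rw [hq2]
      exact heven t (by omega)
  rw [Vw] at hVz
  rcases mul_eq_zero.mp hVz with h | h
  · exact h
  · exact absurd (pow_eq_zero_iff (by norm_num)|>.mp h) hsin

end PsiAux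

set_option maxHeartbeats 2000000 in
open PsiAux in
theorem psi_explicit_solution_unique (N : ℕ) (hN4 : 4 ∣ N) (hN8 : 8 ≤ N)
    (b1 : ℝ) (hb1 : b1 ≠ 0) :
    (∀ x ∈ S1set N ∪ S2set N, psi N (bsol N b1) x.1 x.2.1 x.2.2.1 x.2.2.2 = 0) ∧
    ∀ b' : Fin (N / 2) → ℝ, b' ⟨0, by omega⟩ = b1 →
      (∀ x ∈ S1set N ∪ S2set N, psi N b' x.1 x.2.1 x.2.2.1 x.2.2.2 = 0) →
      b' = bsol N b1 := by
  obtain ⟨K, rfl⟩ := hN4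
  have hK2 : 2 ≤ K := by omega
  have hK : 0 < K := by omega
  have h2K : 4*K/2 = 2*K := by omega
  have hcN2 : ((4*K:ℕ):ℤ)/2 = 2*(K:ℤ) := by push_cast; omega
  have hcN4 : ((4*K:ℕ):ℤ)/4 = (K:ℤ) := by push_cast; omega
  have hex : ∀ x ∈ S1set (4*K) ∪ S2set (4*K),
      psi (4*K) (bsol (4*K) b1) x.1 x.2.1 x.2.2.1 x.2.2.2 = 0 := by
    intro x hx
    rcases hx with h | h
    · obtain ⟨n, hn1, hnK, hxe⟩ := h
      subst hxe
      rw [hcN4] at hnK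
      set n' : ℕ := n.toNat with hn'
      have hnn : n = (n':ℤ) := by rw [hn']; omega
      show psi (4*K) (bsol (4*K) b1) 0 (n+1) (((4*K:ℕ):ℤ)/2 - n) (((4*K:ℕ):ℤ)/2 - 1) = 0
      rw [hcN2, hnn, psi_eq, h2K]
      exact exist1 K hK2 b1 n' (by omega) (by omega)
    · obtain ⟨m, hm, hxe⟩ := h
      subst hxe
      have hm' : m = 1 ∨ (3 ≤ m ∧ m ≤ (K:ℤ)+1) := by
        rcases hm with h | ⟨ha, hb⟩
        · exact Or.inl h
        · rw [hcN4] at hb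
          exact Or.inr ⟨ha, hb⟩
      show psi (4*K) (bsol (4*K) b1) (2-m) m (((4*K:ℕ):ℤ)/2 - 1) (((4*K:ℕ):ℤ)/2 - 1) = 0
      rw [hcN2, psi_eq, h2K]
      exact exist2 K hK2 b1 m hm'
  refine ⟨hex, ?_⟩
  intro b' hb'1 hb'eq
  have hd0pos : 0 < 4*K/2 := by omega
  set d : Fin (4*K/2) → ℝ := fun i => b' i - bsol (4*K) b1 i with hd
  set D : ℕ → ℝ := Dof (4*K) d with hD
  have hDsub : ∀ q, D q = Dof (4*K) b' q - Dof (4*K) (bsol (4*K) b1) q := by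
    intro q
    rw [hD, Dof, Dof, Dof]
    by_cases hlt : q < 4*K/2
    · rw [dif_pos hlt, dif_pos hlt, dif_pos hlt, hd]
    · rw [dif_neg hlt, dif_neg hlt, dif_neg hlt]; ring
  have hpsi_d : ∀ i j k l : ℤ, psi (4*K) b' i j k l = 0 →
      psi (4*K) (bsol (4*K) b1) i j k l = 0 →
      -∑ q ∈ range (2*K), (-1:ℝ)^(q+1) * D q * ff (4*K) i j k l (q+1) = 0 := by
    intro i j k l h1 h2
    rw [psi_eq, h2K] at h1 h2
    have hc : ∀ q ∈ range (2*K), (-1:ℝ)^(q+1) * D q * ff (4*K) i j k l (q+1)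
        = (-1:ℝ)^(q+1) * Dof (4*K) b' q * ff (4*K) i j k l (q+1)
          - (-1:ℝ)^(q+1) * Dof (4*K) (bsol (4*K) b1) q * ff (4*K) i j k l (q+1) := by
      intro q _
      rw [hDsub q]; ring
    rw [Finset.sum_congr rfl hc, Finset.sum_sub_distrib]
    linarith [h1, h2]
  have hsne : Real.sin (π/((4*K:ℕ):ℝ)) ≠ 0 := by
    have h := sin_node_pos K hK 1 one_pos (by
      have : (1:ℝ) ≤ 2*(K:ℝ) := by
        have : (1:ℕ) ≤ 2*K := by omega
        exact_mod_cast this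
      exact this)
    have e : (1:ℝ)*π/(4*(K:ℝ)) = π/((4*K:ℕ):ℝ) := by push_cast; ring
    rw [e] at h; linarith
  have hD0 : D 0 = 0 := by
    rw [hD, Dof, dif_pos hd0pos, hd]
    simp only []
    have hb0 : b' ⟨0, hd0pos⟩ = b1 := hb'1
    have hbs0 : bsol (4*K) b1 ⟨0, hd0pos⟩ = b1 := by
      rw [bsol]
      simp only []
      rw [if_neg (show ¬ (((⟨0,hd0pos⟩ : Fin (4*K/2)) : ℕ) + 1 = 4*K/2) by
        show ¬ (0 + 1 = 4*K/2); omega)]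
      show b1 * Real.sin (π/((4*K:ℕ):ℝ))^2 / Real.sin ((((0:ℕ):ℝ)+1)*π/((4*K:ℕ):ℝ))^2 = b1
      have hs : (((0:ℕ):ℝ)+1) = 1 := by norm_num
      rw [hs, one_mul]
      have hsne' : Real.sin (π/(4*(K:ℝ))) ≠ 0 := by
        have e : π/((4*K:ℕ):ℝ) = π/(4*(K:ℝ)) := by push_cast; ring
        rw [e] at hsne; exact hsne
      field_simp
    rw [hb0, hbs0]
    ring
  have heq1 : ∀ n:ℕ, 1 ≤ n → n ≤ K-1 →
      ∑ j ∈ range n, ∑ t ∈ range K,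
        Vw K D (2*t) * Real.cos (((j:ℝ)+1)*(2*(t:ℝ)+1)*π/(2*(K:ℝ))) = 0 := by
    intro n h1 h2
    rw [← red1 K hK D n]
    have hmem : ((0:ℤ), (n:ℤ)+1, 2*(K:ℤ)-(n:ℤ), 2*(K:ℤ)-1) ∈ S1set (4*K) ∪ S2set (4*K) := by
      left
      exact ⟨(n:ℤ), by omega, by rw [hcN4]; omega, by rw [hcN2]⟩
    have e1 := hb'eq _ hmem
    have e2 := hex _ hmem
    simp only [] at e1 e2
    exact hpsi_d 0 ((n:ℤ)+1) (2*(K:ℤ)-n) (2*(K:ℤ)-1) e1 e2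
  have heq2 : ∀ p:ℕ, (p = 0 ∨ (2 ≤ p ∧ p ≤ K)) →
      (∑ q ∈ range (2*K), Vw K D q * Real.cos (((q:ℝ)+1)*π/(2*(K:ℝ))))
        + ∑ q ∈ range (2*K), (-1:ℝ)^q * Vw K D q * Real.cos ((p:ℝ)*((q:ℝ)+1)*π/(2*(K:ℝ))) = 0 := by
    intro p hp
    have hmem : ((2-((p:ℤ)+1)), ((p:ℤ)+1), 2*(K:ℤ)-1, 2*(K:ℤ)-1) ∈ S1set (4*K) ∪ S2set (4*K) := by
      right
      refine ⟨(p:ℤ)+1, ?_, by rw [hcN2]⟩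
      rcases hp with h | ⟨h1, h2⟩
      · left; omega
      · right
        refine ⟨by omega, ?_⟩
        rw [hcN4]; omega
    have e1 := hb'eq _ hmem
    have e2 := hex _ hmem
    simp only [] at e1 e2
    have h0 := hpsi_d (2-((p:ℤ)+1)) ((p:ℤ)+1) (2*(K:ℤ)-1) (2*(K:ℤ)-1) e1 e2
    rw [red2 K hK D ((p:ℤ)+1)] at h0
    have hconv : ∑ q ∈ range (2*K), (-1:ℝ)^q * Vw K D q *
          Real.cos (((((p:ℤ)+1 : ℤ)):ℝ)*((q:ℝ)+1)*π/(2*(K:ℝ)) - ((q:ℝ)+1)*π/(2*(K:ℝ)))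
        = ∑ q ∈ range (2*K), (-1:ℝ)^q * Vw K D q *
          Real.cos ((p:ℝ)*((q:ℝ)+1)*π/(2*(K:ℝ))) := by
      apply Finset.sum_congr rfl
      intro q _
      congr 2
      push_cast
      ring
    have hconv2 : ∑ q ∈ range (2*K), (-1:ℝ)^q * Vw K D q *
          Real.cos ((((((p:ℤ)+1 : ℤ)):ℝ) - 1)*((q:ℝ)+1)*π/(2*(K:ℝ)))
        = ∑ q ∈ range (2*K), (-1:ℝ)^q * Vw K D q *
          Real.cos ((p:ℝ)*((q:ℝ)+1)*π/(2*(K:ℝ))) := by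
      apply Finset.sum_congr rfl
      intro q _
      congr 2
      push_cast
      ring
    rw [hconv2] at h0
    linarith
  have hDz := uniq_zero K hK2 D hD0 heq1 heq2
  funext r
  have hrlt : (r:ℕ) < 2*K := by
    have := r.is_lt
    omega
  have h0 := hDz (r:ℕ) hrlt
  rw [hD, Dof, dif_pos (by omega : (r:ℕ) < 4*K/2), hd] at h0
  simp only [] at h0
  have hfe : (⟨(r:ℕ), by omega⟩ : Fin (4*K/2)) = r := Fin.ext rfl
  rw [hfe] at h0
  linarith [h0]
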